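/- Winning strategy in the flipped branch. Let a binary QIP with data (A, b, c, I∃, I∀) be given, let k ∈ I∀, let x̃ ∈ {0,1}^n, and set x̂_k = 1 − x̃_k. If Conditions (2) and (3) both hold, then the minimax value of the node reached by the prefix (x̃_1, …, x̃_{k−1}, x̂_k) satisfies val((x̃_1, …, x̃_{k−1}, x̂_k)) ≥ c·x̃; in particular a winning strategy exists in the subtree below this node. -/
import Mathlib


/-- The minimax value of the node of a binary QIP in which the first `j`
(0-based) variables have been fixed according to `p` (entries of `p` with
index `≥ j` are irrelevant, since they are overwritten during the recursion).
At a leaf (`j = n`) the value is the objective `c·p` if `A p ≤ b` and `⊥ = -∞`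
otherwise; at an inner node the two branches `0` and `1` are combined by `min`
if the variable is universal (`∈ IA`) and by `max` if it is existential. -/
noncomputable def qipVal {n m : ℕ} (A : Fin m → Fin n → ℝ) (b : Fin m → ℝ)
    (c : Fin n → ℝ) (IA : Finset (Fin n)) (j : ℕ) (p : Fin n → ℝ) : EReal :=
  if h : j < n then
    (if (⟨j, h⟩ : Fin n) ∈ IA then
      min (qipVal A b c IA (j + 1) (Function.update p ⟨j, h⟩ 0))
          (qipVal A b c IA (j + 1) (Function.update p ⟨j, h⟩ 1))
    else
      max (qipVal A b c IA (j + 1) (Function.update p ⟨j, h⟩ 0))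
          (qipVal A b c IA (j + 1) (Function.update p ⟨j, h⟩ 1)))
  else
    (if ∀ i, ∑ j', A i j' * p j' ≤ b i then ((∑ j', c j' * p j' : ℝ) : EReal) else ⊥)
termination_by n - j
decreasing_by all_goals omega

lemma qip_partition_sum {n : ℕ} (IA : Finset (Fin n)) (k : Fin n) (hk : k ∈ IA)
    (f : Fin n → ℝ) :
    ∑ j, f j = (∑ j ∈ Finset.univ.filter (fun j => j ∉ IA ∨ j < k), f j) + f k
      + ∑ j ∈ Finset.univ.filter (fun j => j ∈ IA ∧ k < j), f j := by
  have hfk : f k = ∑ j, if j = k then f j else 0 := by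
    rw [Finset.sum_ite_eq' Finset.univ k f]; simp
  rw [hfk, Finset.sum_filter, Finset.sum_filter, ← Finset.sum_add_distrib,
    ← Finset.sum_add_distrib]
  refine Finset.sum_congr rfl fun j _ => ?_
  by_cases h1 : j ∈ IA
  · rcases lt_trichotomy j k with h2 | h2 | h2
    · simp [h1, h2, h2.ne, asymm h2]
    · subst h2; simp [hk, lt_irrefl]
    · simp [h1, h2, h2.ne', asymm h2]
  · have hjk : j ≠ k := fun h => h1 (h ▸ hk)
    simp [h1, hjk]

theorem qip_aux {n m : ℕ} (A : Fin m → Fin n → ℝ) (b : Fin m → ℝ) (c : Fin n → ℝ)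
    (IA : Finset (Fin n)) (k : Fin n) (hk : k ∈ IA)
    (xt : Fin n → ℝ) (hxt : ∀ j, xt j = 0 ∨ xt j = 1)
    (cond2 : c k * ((1 - xt k) - xt k)
        + ∑ j ∈ Finset.univ.filter (fun j => j ∈ IA ∧ k < j ∧ c j ≤ 0), c j * (1 - xt j)
        - ∑ j ∈ Finset.univ.filter (fun j => j ∈ IA ∧ k < j ∧ 0 < c j), c j * xt j ≥ 0)
    (cond3 : ∀ i,
        (∑ j ∈ Finset.univ.filter (fun j => j ∉ IA ∨ j < k), A i j * xt j)
        + A i k * (1 - xt k)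
        + ∑ j ∈ Finset.univ.filter (fun j => j ∈ IA ∧ k < j ∧ 0 < A i j), A i j ≤ b i)
    (j : ℕ) (hj : k.val < j) (p : Fin n → ℝ)
    (hp : ∀ i : Fin n, i.val < j →
      ((i ∉ IA ∨ i < k) → p i = xt i) ∧ (i = k → p i = 1 - xt k) ∧
      (i ∈ IA ∧ k < i → p i = 0 ∨ p i = 1)) :
    ((∑ j', c j' * xt j' : ℝ) : EReal) ≤ qipVal A b c IA j p := by
  rw [qipVal]
  split_ifs with h hIA hfeas
  · -- universal inner node
    refine le_min ?_ ?_
    · refine qip_aux A b c IA k hk xt hxt cond2 cond3 (j+1) (by omega) _ ?_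
      intro i hi
      by_cases hij : i = (⟨j, h⟩ : Fin n)
      · subst hij
        refine ⟨fun hc => ?_, fun heq => ?_, fun _ => ?_⟩
        · rcases hc with hc | hc
          · exact absurd hIA hc
          · simp only [Fin.lt_def, Fin.val_mk] at hc; omega
        · exact absurd (congrArg Fin.val heq) (by simpa using by omega)
        · left; simp
      · have hvi : i.val ≠ j := fun hv => hij (Fin.ext hv)
        rw [Function.update_of_ne hij]
        exact hp i (by omega)
    · refine qip_aux A b c IA k hk xt hxt cond2 cond3 (j+1) (by omega) _ ?_
      intro i hi
      by_cases hij : i = (⟨j, h⟩ : Fin n)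
      · subst hij
        refine ⟨fun hc => ?_, fun heq => ?_, fun _ => ?_⟩
        · rcases hc with hc | hc
          · exact absurd hIA hc
          · simp only [Fin.lt_def, Fin.val_mk] at hc; omega
        · exact absurd (congrArg Fin.val heq) (by simpa using by omega)
        · right; simp
      · have hvi : i.val ≠ j := fun hv => hij (Fin.ext hv)
        rw [Function.update_of_ne hij]
        exact hp i (by omega)
  · -- existential inner node: follow xt
    have hkj : (⟨j, h⟩ : Fin n) ≠ k := by
      intro heq; exact absurd (congrArg Fin.val heq) (by simpa using by omega)
    have hinv : ∀ v : ℝ, v = xt ⟨j, h⟩ →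
        ∀ i : Fin n, i.val < j + 1 →
          ((i ∉ IA ∨ i < k) → Function.update p ⟨j, h⟩ v i = xt i) ∧
          (i = k → Function.update p ⟨j, h⟩ v i = 1 - xt k) ∧
          (i ∈ IA ∧ k < i → Function.update p ⟨j, h⟩ v i = 0 ∨
            Function.update p ⟨j, h⟩ v i = 1) := by
      intro v hv i hi
      by_cases hij : i = (⟨j, h⟩ : Fin n)
      · subst hij
        refine ⟨fun _ => ?_, fun heq => absurd heq hkj, fun hc => absurd hc.1 hIA⟩
        rw [Function.update_self, hv]
      · have hvi : i.val ≠ j := fun hvv => hij (Fin.ext hvv)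
        rw [Function.update_of_ne hij]
        exact hp i (by omega)
    rcases hxt ⟨j, h⟩ with h0 | h1
    · refine le_trans (qip_aux A b c IA k hk xt hxt cond2 cond3 (j+1) (by omega) _
        (hinv 0 h0.symm)) (le_max_left _ _)
    · refine le_trans (qip_aux A b c IA k hk xt hxt cond2 cond3 (j+1) (by omega) _
        (hinv 1 h1.symm)) (le_max_right _ _)
  · -- leaf, feasible: objective bound
    refine EReal.coe_le_coe_iff.mpr ?_
    have hall : ∀ i : Fin n, ((i ∉ IA ∨ i < k) → p i = xt i) ∧ (i = k → p i = 1 - xt k) ∧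
        (i ∈ IA ∧ k < i → p i = 0 ∨ p i = 1) :=
      fun i => hp i (by have := i.isLt; omega)
    have hpx : ∀ i : Fin n, (i ∉ IA ∨ i < k) → p i = xt i := fun i => (hall i).1
    have hpk : p k = 1 - xt k := (hall k).2.1 rfl
    have hpu : ∀ i : Fin n, i ∈ IA → k < i → p i = 0 ∨ p i = 1 :=
      fun i h1 h2 => (hall i).2.2 ⟨h1, h2⟩
    have hp01 : ∀ i : Fin n, 0 ≤ p i ∧ p i ≤ 1 := by
      intro i
      by_cases h1 : i ∈ IA
      · rcases lt_trichotomy i k with h2 | h2 | h2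
        · rw [hpx i (Or.inr h2)]; rcases hxt i with hh | hh <;> simp [hh]
        · subst h2; rw [hpk]; rcases hxt i with hh | hh <;> simp [hh]
        · rcases hpu i h1 h2 with hh | hh <;> simp [hh]
      · rw [hpx i (Or.inl h1)]; rcases hxt i with hh | hh <;> simp [hh]
    have h1 := qip_partition_sum IA k hk (fun j' => c j' * p j')
    have h2 := qip_partition_sum IA k hk (fun j' => c j' * xt j')
    rw [hpk] at h1
    have e1 : (∑ j' ∈ Finset.univ.filter (fun j' => j' ∉ IA ∨ j' < k), c j' * p j')
        = ∑ j' ∈ Finset.univ.filter (fun j' => j' ∉ IA ∨ j' < k), c j' * xt j' :=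
      Finset.sum_congr rfl fun j' hj' => by
        rw [hpx j' (Finset.mem_filter.mp hj').2]
    have eT1 : (Finset.univ.filter (fun j' => j' ∈ IA ∧ k < j')).filter
        (fun j' => c j' ≤ 0) = Finset.univ.filter (fun j => j ∈ IA ∧ k < j ∧ c j ≤ 0) := by
      ext j'; simp [and_assoc]
    have eT2 : (Finset.univ.filter (fun j' => j' ∈ IA ∧ k < j')).filter
        (fun j' => ¬ c j' ≤ 0) = Finset.univ.filter (fun j => j ∈ IA ∧ k < j ∧ 0 < c j) := by
      ext j'; simp [and_assoc, not_le]
    have s1 := (Finset.sum_filter_add_sum_filter_not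
      (Finset.univ.filter (fun j' => j' ∈ IA ∧ k < j')) (fun j' => c j' ≤ 0)
      (fun j' => c j' * p j')).symm
    have s2 := (Finset.sum_filter_add_sum_filter_not
      (Finset.univ.filter (fun j' => j' ∈ IA ∧ k < j')) (fun j' => c j' ≤ 0)
      (fun j' => c j' * xt j')).symm
    rw [eT1, eT2] at s1 s2
    have b1 : (∑ j' ∈ Finset.univ.filter (fun j => j ∈ IA ∧ k < j ∧ c j ≤ 0), c j' * xt j')
        + (∑ j' ∈ Finset.univ.filter (fun j => j ∈ IA ∧ k < j ∧ c j ≤ 0), c j' * (1 - xt j'))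
        ≤ ∑ j' ∈ Finset.univ.filter (fun j => j ∈ IA ∧ k < j ∧ c j ≤ 0), c j' * p j' := by
      rw [← Finset.sum_add_distrib]
      refine Finset.sum_le_sum fun j' hj' => ?_
      have hc := (Finset.mem_filter.mp hj').2.2.2
      have := (hp01 j').2
      nlinarith
    have b2 : 0 ≤ ∑ j' ∈ Finset.univ.filter (fun j => j ∈ IA ∧ k < j ∧ 0 < c j), c j' * p j' := by
      refine Finset.sum_nonneg fun j' hj' => ?_
      have hc := (Finset.mem_filter.mp hj').2.2.2
      have := (hp01 j').1
      positivity
    have hck : c k * ((1 - xt k) - xt k) = c k * (1 - xt k) - c k * xt k := by ring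
    rw [hck] at cond2
    linarith [cond2, h1, h2, e1, s1, s2, b1, b2]
  ·
    exfalso
    apply hfeas
    intro i
    have hall : ∀ i' : Fin n, ((i' ∉ IA ∨ i' < k) → p i' = xt i') ∧ (i' = k → p i' = 1 - xt k) ∧
        (i' ∈ IA ∧ k < i' → p i' = 0 ∨ p i' = 1) :=
      fun i' => hp i' (by have := i'.isLt; omega)
    have hpx : ∀ i' : Fin n, (i' ∉ IA ∨ i' < k) → p i' = xt i' := fun i' => (hall i').1
    have hpk : p k = 1 - xt k := (hall k).2.1 rfl
    have hpu : ∀ i' : Fin n, i' ∈ IA → k < i' → p i' = 0 ∨ p i' = 1 :=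
      fun i' h1 h2 => (hall i').2.2 ⟨h1, h2⟩
    have hp01 : ∀ i' : Fin n, 0 ≤ p i' ∧ p i' ≤ 1 := by
      intro i'
      by_cases h1 : i' ∈ IA
      · rcases lt_trichotomy i' k with h2 | h2 | h2
        · rw [hpx i' (Or.inr h2)]; rcases hxt i' with hh | hh <;> simp [hh]
        · subst h2; rw [hpk]; rcases hxt i' with hh | hh <;> simp [hh]
        · rcases hpu i' h1 h2 with hh | hh <;> simp [hh]
      · rw [hpx i' (Or.inl h1)]; rcases hxt i' with hh | hh <;> simp [hh]
    have h1 := qip_partition_sum IA k hk (fun j' => A i j' * p j')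
    rw [hpk] at h1
    have e1 : (∑ j' ∈ Finset.univ.filter (fun j' => j' ∉ IA ∨ j' < k), A i j' * p j')
        = ∑ j' ∈ Finset.univ.filter (fun j' => j' ∉ IA ∨ j' < k), A i j' * xt j' :=
      Finset.sum_congr rfl fun j' hj' => by
        rw [hpx j' (Finset.mem_filter.mp hj').2]
    have eT1 : (Finset.univ.filter (fun j' => j' ∈ IA ∧ k < j')).filter
        (fun j' => 0 < A i j') = Finset.univ.filter (fun j => j ∈ IA ∧ k < j ∧ 0 < A i j) := by
      ext j'; simp [and_assoc]
    have s1 := (Finset.sum_filter_add_sum_filter_not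
      (Finset.univ.filter (fun j' => j' ∈ IA ∧ k < j')) (fun j' => 0 < A i j')
      (fun j' => A i j' * p j')).symm
    rw [eT1] at s1
    have b1 : (∑ j' ∈ Finset.univ.filter (fun j => j ∈ IA ∧ k < j ∧ 0 < A i j), A i j' * p j')
        ≤ ∑ j' ∈ Finset.univ.filter (fun j => j ∈ IA ∧ k < j ∧ 0 < A i j), A i j' := by
      refine Finset.sum_le_sum fun j' hj' => ?_
      have hc := (Finset.mem_filter.mp hj').2.2.2
      have := (hp01 j').2
      nlinarith
    have b2 : (∑ j' ∈ (Finset.univ.filter (fun j' => j' ∈ IA ∧ k < j')).filter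
        (fun j' => ¬ 0 < A i j'), A i j' * p j') ≤ 0 := by
      refine Finset.sum_nonpos fun j' hj' => ?_
      have hc := not_lt.mp (Finset.mem_filter.mp hj').2
      have := (hp01 j').1
      nlinarith
    have hc3 := cond3 i
    linarith [h1, e1, s1, b1, b2, hc3]
termination_by n - j
decreasing_by all_goals omega

/-- **Winning strategy in the flipped branch.**  For a binary QIP with
constraint system `A x ≤ b`, objective `c` and universal indices `IA`
(existential indices being the complement), let `k ∈ IA`, let `x̃` be a full
binary assignment and set `x̂_k = 1 - x̃_k`.  If Conditions (2) and (3) both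
hold, then the minimax value of the node reached by the prefix
`(x̃_1, …, x̃_{k-1}, x̂_k)` is at least `c·x̃`; in particular a winning
strategy exists in the subtree below this node. -/
theorem flipped_branch_winning_strategy {n m : ℕ}
    (A : Fin m → Fin n → ℝ) (b : Fin m → ℝ) (c : Fin n → ℝ)
    (IA : Finset (Fin n)) (k : Fin n) (hk : k ∈ IA)
    (xt : Fin n → ℝ) (hxt : ∀ j, xt j = 0 ∨ xt j = 1)
    -- Condition (2)
    (cond2 : c k * ((1 - xt k) - xt k)
        + ∑ j ∈ Finset.univ.filter (fun j => j ∈ IA ∧ k < j ∧ c j ≤ 0), c j * (1 - xt j)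
        - ∑ j ∈ Finset.univ.filter (fun j => j ∈ IA ∧ k < j ∧ 0 < c j), c j * xt j ≥ 0)
    -- Condition (3)
    (cond3 : ∀ i,
        (∑ j ∈ Finset.univ.filter (fun j => j ∉ IA ∨ j < k), A i j * xt j)
        + A i k * (1 - xt k)
        + ∑ j ∈ Finset.univ.filter (fun j => j ∈ IA ∧ k < j ∧ 0 < A i j), A i j ≤ b i) :
    qipVal A b c IA (k.val + 1) (Function.update xt k (1 - xt k))
      ≥ ((∑ j, c j * xt j : ℝ) : EReal) := by
  refine qip_aux A b c IA k hk xt hxt cond2 cond3 (k.val + 1) (by omega) _ ?_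
  intro i hi
  by_cases hik : i = k
  · subst hik
    refine ⟨fun hc => ?_, fun _ => ?_, fun hc => absurd hc.2 (lt_irrefl i)⟩
    · rcases hc with hc | hc
      · exact absurd hk hc
      · exact absurd hc (lt_irrefl i)
    · rw [Function.update_self]
  · have hvi : i.val ≠ k.val := fun hv => hik (Fin.ext hv)
    have hilt : i < k := by rw [Fin.lt_def]; omega
    rw [Function.update_of_ne hik]
    exact ⟨fun _ => rfl, fun heq => absurd heq hik,
      fun hc => absurd hc.2 (asymm hilt)⟩
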